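/- A finite matroid M is binary if and only if for every circuit C of M and every cocircuit D of M the intersection C ∩ D has an even number of elements. -/

import Mathlib

/-- `ρ` is a representation of the matroid `M` over the field `K`. -/
def Matroid.IsRep {α : Type*} (M : Matroid α) (K : Type*) [Field K] {V : Type*}
    [AddCommGroup V] [Module K V] (ρ : α → V) : Prop :=
  (∀ S ⊆ M.E, (M.Indep S ↔ Set.InjOn ρ S ∧ LinearIndependent K ((↑) : (ρ '' S) → V))) ∧
    Submodule.span K (ρ '' M.E) = ⊤

/-- `M` is representable over the field `K`. -/
def Matroid.RepresentableOver {α : Type*} (M : Matroid α) (K : Type) [Field K] : Prop :=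
  ∃ (V : Type) (_ : AddCommGroup V) (_ : Module K V) (ρ : α → V), M.IsRep K ρ

/-- A matroid is binary if it admits a representation over `𝔽₂ = ZMod 2`. -/
def Matroid.IsBinary {α : Type*} (M : Matroid α) : Prop :=
  M.RepresentableOver (ZMod 2)

/-- A circuit of `M` is a minimal dependent set. -/
def Matroid.IsCircuit' {α : Type*} (M : Matroid α) (C : Set α) : Prop :=
  M.Dep C ∧ ∀ D, D ⊂ C → ¬ M.Dep D

open Set Submodule

open Set Submodule

section Helpers

variable {K : Type*} [Field K] {V : Type*} [AddCommGroup V] [Module K V]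

theorem linearIndependent_image {R M ι : Type*} [Ring R] [AddCommGroup M] [Module R M]
    {s : Set ι} {f : ι → M} (hf : Set.InjOn f s) :
    (LinearIndependent R fun x : s => f x) ↔ LinearIndependent R fun x : f '' s => (x : M) :=
  linearIndepOn_iff_image hf

theorem linearIndependent_insert {K V : Type*} [DivisionRing K] [AddCommGroup V] [Module K V]
    {s : Set V} {x : V} (hxs : x ∉ s) :
    (LinearIndependent K fun b : ↥(insert x s) => (b : V)) ↔
      (LinearIndependent K fun b : s => (b : V)) ∧ x ∉ Submodule.span K s :=
  linearIndepOn_id_insert hxs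

lemma zmod2_eq_one_of_ne_zero {a : ZMod 2} (h : a ≠ 0) : a = 1 := by
  revert h; revert a; decide

lemma zmod2_add_self {V : Type*} [AddCommGroup V] [Module (ZMod 2) V] (u : V) : u + u = 0 := by
  rw [← two_smul (ZMod 2) u, show (2 : ZMod 2) = 0 by decide, zero_smul]

lemma zmod2_eq_of_add_eq_zero {V : Type*} [AddCommGroup V] [Module (ZMod 2) V] {a b : V}
    (h : a + b = 0) : a = b := by
  have h2 := zmod2_add_self (V := V) b
  calc a = a + b + b := by rw [add_assoc, h2, add_zero]
  _ = b := by rw [h, zero_add]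

/-- A finite nonempty subset of a linearly independent set has nonzero sum. -/
lemma finset_sum_ne_zero_of_linearIndependent
    {s : Set V} (hs : LinearIndependent K ((↑) : s → V)) {t : Finset V} (hts : ↑t ⊆ s)
    (hne : t.Nonempty) : ∑ v ∈ t, v ≠ 0 := by
  classical
  obtain ⟨v₀, hv₀⟩ := hne
  intro h0
  have h1 := linearIndependent_iff'.1 hs
      (t.attach.map ⟨fun v => (⟨v.1, hts v.2⟩ : s),
        by intro a b hab; exact Subtype.ext (by simpa using congrArg Subtype.val hab)⟩)
      (fun _ => (1 : K)) ?_ ⟨v₀, hts hv₀⟩ ?_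
  · exact one_ne_zero h1
  · rw [Finset.sum_map]
    simp only [one_smul, Function.Embedding.coeFn_mk]
    refine (Finset.sum_attach t (fun v => v)).trans ?_
    exact h0
  · simp only [Finset.mem_map, Finset.mem_attach, Function.Embedding.coeFn_mk, true_and]
    exact ⟨⟨v₀, hv₀⟩, rfl⟩

/-- Over `ZMod 2`, a linearly dependent set of vectors has a finite nonempty
subset with zero sum. -/
lemma exists_finset_sum_eq_zero_of_not_linearIndependent
    {V : Type*} [AddCommGroup V] [Module (ZMod 2) V] {s : Set V}
    (h : ¬ LinearIndependent (ZMod 2) ((↑) : s → V)) :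
    ∃ t : Finset V, ↑t ⊆ s ∧ t.Nonempty ∧ ∑ v ∈ t, v = 0 := by
  classical
  have h' : ¬ LinearIndependent (ZMod 2) (id ∘ ((↑) : s → V)) := h
  replace h' := (linearDepOn_iff (R := ZMod 2) (v := (id : V → V)) (s := s)).1 h'
  obtain ⟨f, hsupp, hsum, hne⟩ := h'
  refine ⟨f.support, ?_, Finsupp.support_nonempty_iff.2 hne, ?_⟩
  · exact (Finsupp.mem_supported _ _).1 hsupp
  · rw [← hsum]
    refine (Finset.sum_congr rfl fun v hv => ?_).symm
    rw [zmod2_eq_one_of_ne_zero (Finsupp.mem_support_iff.1 hv), one_smul, id_eq]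

/-- Linear independence of an image set under an injective linear map. -/
lemma linearIndependent_image_iff_of_injective {W : Type*} [AddCommGroup W] [Module K W]
    (f : V →ₗ[K] W) (hf : Function.Injective f) (s : Set V) :
    LinearIndependent K ((↑) : (f '' s) → W) ↔ LinearIndependent K ((↑) : s → V) := by
  rw [← linearIndependent_image (hf.injOn)]
  exact f.linearIndependent_iff (LinearMap.ker_eq_bot.2 hf)

end Helpers





section MatroidLemmas

variable {α : Type*} {M : Matroid α}

lemma exists_isCircuit_subset [M.Finite] {S : Set α} (hS : M.Dep S) :
    ∃ C, C ⊆ S ∧ M.IsCircuit' C := by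
  have key : ∀ (n : ℕ) (S : Set α), S.ncard ≤ n → M.Dep S → ∃ C, C ⊆ S ∧ M.IsCircuit' C := by
    intro n
    induction n with
    | zero =>
      intro S hcard hdep
      have hfin : S.Finite := M.set_finite S hdep.subset_ground
      rw [Nat.le_zero, Set.ncard_eq_zero hfin] at hcard
      exact absurd (hcard ▸ hdep).nonempty (by simp)
    | succ n ih =>
      intro S hcard hdep
      by_cases h : ∀ D, D ⊂ S → ¬ M.Dep D
      · exact ⟨S, Subset.rfl, hdep, h⟩
      · push_neg at h
        obtain ⟨D, hDS, hD⟩ := h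
        have hfin : S.Finite := M.set_finite S hdep.subset_ground
        have hlt : D.ncard < S.ncard := Set.ncard_lt_ncard hDS hfin
        obtain ⟨C, hCD, hC⟩ := ih D (by omega) hD
        exact ⟨C, hCD.trans hDS.subset, hC⟩
  exact key S.ncard S le_rfl hS

lemma cocircuit_subset_ground {D : Set α} (hD : M✶.IsCircuit' D) : D ⊆ M.E := by
  have := hD.1.subset_ground
  rwa [Matroid.dual_ground] at this

lemma cocircuit_closure_insert_compl {D : Set α} (hD : M✶.IsCircuit' D) {e : α} (he : e ∈ D) :
    M.closure (insert e (M.E \ D)) = M.E := by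
  have hDE : D ⊆ M.E := cocircuit_subset_ground hD
  have hssub : D \ {e} ⊂ D := sdiff_singleton_ssubset.2 he
  have hsub' : D \ {e} ⊆ M✶.E := by
    rw [Matroid.dual_ground]; exact diff_subset.trans hDE
  have hindep : M✶.Indep (D \ {e}) := by
    by_contra h
    rw [Matroid.not_indep_iff hsub'] at h
    exact hD.2 _ hssub h
  have hspan : M.Spanning (M.E \ (D \ {e})) :=
    (Matroid.coindep_iff_compl_spanning (diff_subset.trans hDE)).1 hindep
  have hset : M.E \ (D \ {e}) = insert e (M.E \ D) := by
    rw [Set.diff_diff_right]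
    rw [Set.inter_eq_self_of_subset_right (singleton_subset_iff.2 (hDE he))]
    rw [Set.union_singleton]
  rw [hset] at hspan
  exact (Matroid.spanning_iff_closure_eq (insert_subset (hDE he) diff_subset)).1 hspan

lemma cocircuit_not_mem_closure_compl {D : Set α} (hD : M✶.IsCircuit' D) {e : α} (he : e ∈ D) :
    e ∉ M.closure (M.E \ D) := by
  intro hecl
  have h1 : M.closure (insert e (M.E \ D)) = M.closure (M.E \ D) :=
    Matroid.closure_insert_eq_of_mem_closure hecl
  have h2 : M.closure (M.E \ D) = M.E := by
    rw [← h1]; exact cocircuit_closure_insert_compl hD he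
  have hspan : M.Spanning (M.E \ D) :=
    (Matroid.spanning_iff_closure_eq diff_subset).2 h2
  have hcoind : M✶.Indep D :=
    (Matroid.coindep_iff_compl_spanning (cocircuit_subset_ground hD)).2 hspan
  exact hD.1.not_indep hcoind

/-- The fundamental cocircuit: for `S` independent and `e ∈ S`, there is a cocircuit
meeting `S` exactly in `e`. -/
lemma exists_cocircuit_inter {S : Set α} (hS : M.Indep S) {e : α} (he : e ∈ S) :
    ∃ D, M✶.IsCircuit' D ∧ D ∩ S = {e} := by
  obtain ⟨B, hB, hSB⟩ := hS.exists_isBase_superset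
  have heB : e ∈ B := hSB he
  set F := M.closure (B \ {e}) with hF
  have hFE : F ⊆ M.E := M.closure_subset_ground _
  have heF : e ∉ F := hB.indep.notMem_closure_sdiff_of_mem heB
  have heE : e ∈ M.E := hB.subset_ground heB
  have hcompl : M.E \ (M.E \ F) = F := by
    rw [Set.diff_diff_cancel_left hFE]
  refine ⟨M.E \ F, ⟨?_, ?_⟩, ?_⟩
  · rw [← Matroid.not_indep_iff (show M.E \ F ⊆ M✶.E by rw [Matroid.dual_ground]; exact diff_subset)]
    intro hind
    have hspan : M.Spanning F := by
      have := (Matroid.coindep_iff_compl_spanning diff_subset).1 hind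
      rwa [hcompl] at this
    have hclF : M.closure (B \ {e}) = M.E := by
      have := (Matroid.spanning_iff_closure_eq hFE).1 hspan
      rwa [hF, Matroid.closure_closure] at this
    have hBspan : M.Spanning (B \ {e}) :=
      (Matroid.spanning_iff_closure_eq (diff_subset.trans hB.subset_ground)).2 hclF
    have hbase : M.IsBase (B \ {e}) := hBspan.isBase_of_indep (hB.indep.subset diff_subset)
    have := hbase.eq_of_subset_isBase hB diff_subset
    rw [← this] at heB
    exact heB.2 rfl
  · intro X hX hXdep
    have hXE : X ⊆ M.E := by have h0 := hXdep.subset_ground; rwa [Matroid.dual_ground] at h0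
    obtain ⟨f, hfD, hfX⟩ := exists_of_ssubset hX
    have hfE : f ∈ M.E := hfD.1
    have hfF : f ∉ F := hfD.2
    have hspan2 : M.Spanning (insert f F) := by
      by_cases hfe : f = e
      · subst hfe
        refine Matroid.Spanning.superset hB.spanning ?_ (insert_subset hfE hFE)
        intro b hb
        by_cases hbe : b = f
        · exact hbe ▸ mem_insert _ _
        · exact mem_insert_of_mem _ (M.subset_closure _ (diff_subset.trans hB.subset_ground) ⟨hb, hbe⟩)
      · have hfB : f ∉ B := by
          intro hfB
          exact hfF (M.subset_closure _ (diff_subset.trans hB.subset_ground) ⟨hfB, hfe⟩)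
        have hfBe : f ∉ B \ {e} := fun h => hfB h.1
        have hind2 : M.Indep (insert f (B \ {e})) :=
          ((hB.indep.subset diff_subset).insert_indep_iff_of_notMem hfBe).2 ⟨hfE, hfF⟩
        have hbase2 : M.IsBase (insert f (B \ {e})) := hB.exchange_isBase_of_indep hfB hind2
        refine Matroid.Spanning.superset hbase2.spanning ?_ (insert_subset hfE hFE)
        exact insert_subset_insert (M.subset_closure _ (diff_subset.trans hB.subset_ground))
    have hsub3 : insert f F ⊆ M.E \ X := by
      refine insert_subset ⟨hfE, hfX⟩ ?_
      intro x hx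
      exact ⟨hFE hx, fun hxX => (hX.subset hxX).2 hx⟩
    have hspan3 : M.Spanning (M.E \ X) := hspan2.superset hsub3 diff_subset
    have : M✶.Indep X := (Matroid.coindep_iff_compl_spanning hXE).2 hspan3
    exact hXdep.not_indep this
  · apply Set.eq_singleton_iff_unique_mem.2
    refine ⟨⟨⟨heE, heF⟩, he⟩, ?_⟩
    rintro x ⟨⟨hxE, hxF⟩, hxS⟩
    by_contra hxe
    exact hxF (M.subset_closure _ (diff_subset.trans hB.subset_ground) ⟨hSB hxS, hxe⟩)

end MatroidLemmas

section RepLemmas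

variable {α : Type*} {V : Type*} [AddCommGroup V] [Module (ZMod 2) V]
  {M : Matroid α} {ρ : α → V}

lemma indep_sum_ne_zero (hρ : M.IsRep (ZMod 2) ρ) {T : Finset α} (hT : M.Indep ↑T)
    (hne : T.Nonempty) : ∑ e ∈ T, ρ e ≠ 0 := by
  classical
  obtain ⟨hinj, hli⟩ := (hρ.1 ↑T hT.subset_ground).1 hT
  have hsum : ∑ v ∈ T.image ρ, (v : V) = ∑ e ∈ T, ρ e := Finset.sum_image (g := ρ)
    (f := fun v : V => v) (fun x hx y hy h => hinj (by simpa using hx) (by simpa using hy) h)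
  rw [← hsum]
  refine finset_sum_ne_zero_of_linearIndependent hli ?_ (hne.image ρ)
  rw [Finset.coe_image]

lemma dep_exists_sum_zero (hρ : M.IsRep (ZMod 2) ρ) {T : Finset α} (hT : M.Dep ↑T) :
    ∃ t : Finset α, t ⊆ T ∧ t.Nonempty ∧ ∑ e ∈ t, ρ e = 0 := by
  classical
  by_cases hinj : Set.InjOn ρ ↑T
  · have hnli : ¬ LinearIndependent (ZMod 2) ((↑) : (ρ '' ↑T) → V) := fun hli =>
      hT.not_indep ((hρ.1 ↑T hT.subset_ground).2 ⟨hinj, hli⟩)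
    obtain ⟨t', ht's, ht'ne, ht'sum⟩ := exists_finset_sum_eq_zero_of_not_linearIndependent hnli
    refine ⟨T.filter (fun e => ρ e ∈ t'), Finset.filter_subset _ _, ?_, ?_⟩
    · obtain ⟨v, hv⟩ := ht'ne
      obtain ⟨e, heT, rfl⟩ := ht's hv
      exact ⟨e, Finset.mem_filter.2 ⟨by simpa using heT, hv⟩⟩
    · have himg : (T.filter (fun e => ρ e ∈ t')).image ρ = t' := by
        apply Finset.Subset.antisymm
        · intro v hv
          obtain ⟨e, he, rfl⟩ := Finset.mem_image.1 hv
          exact (Finset.mem_filter.1 he).2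
        · intro v hv
          obtain ⟨e, heT, rfl⟩ := ht's hv
          exact Finset.mem_image.2 ⟨e, Finset.mem_filter.2 ⟨by simpa using heT, hv⟩, rfl⟩
      have hinj' : Set.InjOn ρ ↑(T.filter (fun e => ρ e ∈ t')) :=
        hinj.mono (by exact_mod_cast Finset.filter_subset _ _)
      have hsi := Finset.sum_image (s := T.filter (fun e => ρ e ∈ t')) (g := ρ)
        (f := fun v : V => v)
        (fun x hx y hy h => hinj' (by simpa using hx) (by simpa using hy) h)
      rw [himg] at hsi
      rw [← hsi, ht'sum]
  · rw [Set.InjOn] at hinj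
    push_neg at hinj
    obtain ⟨x, hx, y, hy, hxy, hne⟩ := hinj
    refine ⟨{x, y}, ?_, ⟨x, by simp⟩, ?_⟩
    · intro a ha
      rcases Finset.mem_insert.1 ha with rfl | ha
      · simpa using hx
      · simpa using (Finset.mem_singleton.1 ha) ▸ hy
    · rw [Finset.sum_pair hne, hxy, zmod2_add_self]

lemma circuit_sum_eq_zero [M.Finite] (hρ : M.IsRep (ZMod 2) ρ) {C : Finset α}
    (hC : M.IsCircuit' ↑C) : ∑ e ∈ C, ρ e = 0 := by
  obtain ⟨t, htC, htne, htsum⟩ := dep_exists_sum_zero hρ hC.1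
  have hdep : M.Dep ↑t := by
    rw [← Matroid.not_indep_iff ((Finset.coe_subset.2 htC).trans hC.1.subset_ground)]
    intro hind
    exact indep_sum_ne_zero hρ hind htne htsum
  have : t = C := by
    by_contra hne
    exact hC.2 ↑t (ssubset_of_subset_of_ne (Finset.coe_subset.2 htC)
      (fun h => hne (Finset.coe_inj.1 h))) hdep
  rw [← this]; exact htsum

lemma mem_span_of_mem_closure [M.Finite] (hρ : M.IsRep (ZMod 2) ρ) {S : Set α}
    (hS : S ⊆ M.E) {e : α} (he : e ∈ M.closure S) :
    ρ e ∈ Submodule.span (ZMod 2) (ρ '' S) := by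
  classical
  obtain ⟨I, hI⟩ := M.exists_isBasis S hS
  by_cases heI : e ∈ I
  · exact subset_span ⟨e, hI.subset heI, rfl⟩
  have hIE : I ⊆ M.E := hI.indep.subset_ground
  have hdep : M.Dep (insert e I) := hI.indep.insert_dep_iff.2
    ⟨by rwa [hI.closure_eq_closure], heI⟩
  have hfin : (insert e I).Finite := (M.set_finite I hIE).insert e
  obtain ⟨t, hts, htne, htsum⟩ := dep_exists_sum_zero hρ (T := hfin.toFinset)
    (by rw [Set.Finite.coe_toFinset]; exact hdep)
  have htsub : ↑t ⊆ insert e I := by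
    intro x hx
    have := hts hx
    rwa [Set.Finite.mem_toFinset] at this
  have het : e ∈ t := by
    by_contra het
    have htI : ↑t ⊆ I := fun x hx => ((htsub hx).resolve_left (fun h => het (h ▸ hx)))
    exact indep_sum_ne_zero hρ (hI.indep.subset htI) htne htsum
  have hsum2 : ρ e + ∑ x ∈ t.erase e, ρ x = 0 := by
    rw [Finset.add_sum_erase t ρ het]; exact htsum
  have : ρ e = ∑ x ∈ t.erase e, ρ x := zmod2_eq_of_add_eq_zero hsum2
  rw [this]
  refine Submodule.sum_mem _ (fun x hx => subset_span ?_)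
  have hxI : x ∈ I := by
    have hxt := Finset.mem_of_mem_erase hx
    exact (htsub hxt).resolve_left (fun h => (Finset.ne_of_mem_erase hx) h)
  exact ⟨x, hI.subset hxI, rfl⟩

lemma not_mem_span_of_not_mem_closure [M.Finite] (hρ : M.IsRep (ZMod 2) ρ) {S : Set α}
    (hS : S ⊆ M.E) {e : α} (heE : e ∈ M.E) (he : e ∉ M.closure S) :
    ρ e ∉ Submodule.span (ZMod 2) (ρ '' S) := by
  obtain ⟨I, hI⟩ := M.exists_isBasis S hS
  have hIE : I ⊆ M.E := hI.indep.subset_ground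
  have hspan : Submodule.span (ZMod 2) (ρ '' S) = Submodule.span (ZMod 2) (ρ '' I) := by
    apply le_antisymm
    · rw [Submodule.span_le]
      rintro v ⟨s, hsS, rfl⟩
      exact mem_span_of_mem_closure hρ hIE (hI.subset_closure hsS)
    · exact Submodule.span_mono (Set.image_mono hI.subset)
  have heI : e ∉ I := fun h => he (M.subset_closure S hS (hI.subset h))
  have hind : M.Indep (insert e I) :=
    (hI.indep.insert_indep_iff_of_notMem heI).2 ⟨heE, by rwa [hI.closure_eq_closure]⟩
  obtain ⟨hinj, hli⟩ := (hρ.1 _ hind.subset_ground).1 hind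
  rw [Set.image_insert_eq] at hli
  have hρeI : ρ e ∉ ρ '' I := by
    rintro ⟨x, hxI, hx⟩
    exact heI ((hinj (mem_insert e I) (mem_insert_of_mem _ hxI) hx.symm) ▸ hxI)
  rw [hspan]
  exact ((linearIndependent_insert hρeI).1 hli).2

end RepLemmas

section Forward

variable {α : Type*} {M : Matroid α}

lemma forward_direction [M.Finite] (h : M.IsBinary) {C D : Set α}
    (hC : M.IsCircuit' C) (hD : M✶.IsCircuit' D) : Even (C ∩ D).ncard := by
  classical
  obtain ⟨V, _, _, ρ, hρ⟩ := h
  have hDE : D ⊆ M.E := cocircuit_subset_ground hD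
  set H : Set α := M.E \ D with hH
  have hHE : H ⊆ M.E := diff_subset
  set W : Submodule (ZMod 2) V := Submodule.span (ZMod 2) (ρ '' H) with hW
  set q : V →ₗ[ZMod 2] V ⧸ W := W.mkQ with hq
  have hqz : ∀ e ∈ D, q (ρ e) ≠ 0 := by
    intro e he h0
    rw [hq, Submodule.mkQ_apply, Submodule.Quotient.mk_eq_zero] at h0
    exact not_mem_span_of_not_mem_closure hρ hHE (hDE he)
      (cocircuit_not_mem_closure_compl hD he) h0
  obtain ⟨e₀, he₀⟩ := hD.1.nonempty
  have hconst : ∀ e ∈ D, q (ρ e) = q (ρ e₀) := by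
    intro e he
    have h1 : ρ e₀ ∈ Submodule.span (ZMod 2) (ρ '' insert e H) := by
      refine mem_span_of_mem_closure hρ (insert_subset (hDE he) hHE) ?_
      rw [cocircuit_closure_insert_compl hD he]
      exact hDE he₀
    rw [Set.image_insert_eq, Submodule.mem_span_insert] at h1
    obtain ⟨a, z, hz, hE⟩ := h1
    have hqz' : q z = 0 := by
      rw [hq, Submodule.mkQ_apply, Submodule.Quotient.mk_eq_zero]; exact hz
    have h2 : q (ρ e₀) = a • q (ρ e) := by
      rw [hE, map_add, map_smul, hqz', add_zero]
    have ha : a = 1 := by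
      refine zmod2_eq_one_of_ne_zero (fun h0 => ?_)
      rw [h0, zero_smul] at h2
      exact hqz e₀ he₀ h2
    rw [ha, one_smul] at h2
    exact h2.symm
  have hCE : C ⊆ M.E := hC.1.subset_ground
  have hCfin : C.Finite := M.set_finite C hCE
  have hsum : ∑ e ∈ hCfin.toFinset, ρ e = 0 :=
    circuit_sum_eq_zero hρ (by rw [Set.Finite.coe_toFinset]; exact hC)
  have hqsum : ∑ e ∈ hCfin.toFinset, q (ρ e) = 0 := by
    rw [← map_sum, hsum, map_zero]
  have hfilter : (C ∩ D) = ↑(hCfin.toFinset.filter (· ∈ D)) := by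
    ext x
    simp [Set.Finite.mem_toFinset, and_comm]
  have hcard : (C ∩ D).ncard = (hCfin.toFinset.filter (· ∈ D)).card := by
    rw [hfilter, Set.ncard_coe_finset]
  have hsplit : ∑ e ∈ hCfin.toFinset, q (ρ e) = (C ∩ D).ncard • q (ρ e₀) := by
    rw [← Finset.sum_filter_add_sum_filter_not hCfin.toFinset (· ∈ D)]
    have hz2 : ∑ e ∈ hCfin.toFinset.filter (fun e => ¬ e ∈ D), q (ρ e) = 0 := by
      refine Finset.sum_eq_zero (fun e he => ?_)
      obtain ⟨heC, heD⟩ := Finset.mem_filter.1 he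
      rw [Set.Finite.mem_toFinset] at heC
      have : ρ e ∈ W := subset_span ⟨e, ⟨hCE heC, heD⟩, rfl⟩
      rw [hq, Submodule.mkQ_apply, Submodule.Quotient.mk_eq_zero]
      exact this
    have hz1 : ∑ e ∈ hCfin.toFinset.filter (· ∈ D), q (ρ e) =
        (C ∩ D).ncard • q (ρ e₀) := by
      rw [Finset.sum_congr rfl (fun e he => hconst e (Finset.mem_filter.1 he).2),
        Finset.sum_const, hcard]
    rw [hz1, hz2, add_zero]
  rw [hsplit] at hqsum
  rcases Nat.even_or_odd ((C ∩ D).ncard) with heven | hodd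
  · exact heven
  · exfalso
    obtain ⟨k, hk⟩ := hodd
    rw [hk, add_nsmul, one_nsmul, mul_nsmul, two_nsmul, zmod2_add_self,
      smul_zero, zero_add] at hqsum
    exact hqz e₀ he₀ hqsum

end Forward

section Backward

variable {α : Type*}

open scoped Classical

/-- The incidence function of cocircuits: the candidate binary representation. -/
noncomputable def cocircFun (M : Matroid α) : α → ({D : Set α // M✶.IsCircuit' D} → ZMod 2) :=
  fun e D => if e ∈ D.1 then 1 else 0

lemma cocircFun_apply (M : Matroid α) (e : α) (D : {D : Set α // M✶.IsCircuit' D}) :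
    cocircFun M e D = if e ∈ D.1 then 1 else 0 := rfl

variable {M : Matroid α}

lemma zmod2_eq_zero_of_ne_one {a : ZMod 2} (h : a ≠ 1) : a = 0 := by
  revert h; revert a; decide

lemma cocircFun_indep_iff [M.Finite]
    (h : ∀ C D, M.IsCircuit' C → M✶.IsCircuit' D → Even (C ∩ D).ncard)
    {S : Set α} (hSE : S ⊆ M.E) :
    M.Indep S ↔ Set.InjOn (cocircFun M) S ∧
      LinearIndependent (ZMod 2)
        ((↑) : (cocircFun M '' S) → ({D : Set α // M✶.IsCircuit' D} → ZMod 2)) := by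
  classical
  constructor
  · intro hS
    have hinj : Set.InjOn (cocircFun M) S := by
      intro x hx y hy hxy
      by_contra hne
      obtain ⟨D, hD, hDS⟩ := exists_cocircuit_inter hS hx
      have hxD : x ∈ D := by
        have hx1 : x ∈ ({x} : Set α) := rfl
        rw [← hDS] at hx1
        exact hx1.1
      have hyD : y ∉ D := by
        intro hyD
        have : y ∈ D ∩ S := ⟨hyD, hy⟩
        rw [hDS] at this
        exact hne this.symm
      have h1 : cocircFun M x ⟨D, hD⟩ = 1 := by
        rw [cocircFun_apply]; exact if_pos hxD
      have h2 : cocircFun M y ⟨D, hD⟩ = 0 := by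
        rw [cocircFun_apply]; exact if_neg hyD
      rw [hxy] at h1
      exact one_ne_zero (h1.symm.trans h2)
    refine ⟨hinj, ?_⟩
    rw [← linearIndependent_image hinj]
    rw [linearIndependent_iff']
    intro s g hsum i hi
    by_contra hgi
    have hg1 : g i = 1 := zmod2_eq_one_of_ne_zero hgi
    set t := s.filter (fun j => g j = 1) with ht
    have hit : i ∈ t := Finset.mem_filter.2 ⟨hi, hg1⟩
    have hsum2 : ∑ j ∈ t, cocircFun M (j : α) = 0 := by
      have heq : ∑ j ∈ t, cocircFun M (j : α) = ∑ j ∈ s, g j • cocircFun M (j : α) := by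
        rw [ht, Finset.sum_filter]
        refine Finset.sum_congr rfl (fun j hj => ?_)
        by_cases hgj : g j = 1
        · rw [if_pos hgj, hgj, one_smul]
        · rw [if_neg hgj, zmod2_eq_zero_of_ne_one hgj, zero_smul]
      rw [heq, hsum]
    set T : Set α := Subtype.val '' (↑t : Set ↥S) with hT0
    have hTS : T ⊆ S := by rintro x ⟨j, hj, rfl⟩; exact j.2
    have hTind : M.Indep T := hS.subset hTS
    have hiT : (i : α) ∈ T := ⟨i, Finset.mem_coe.2 hit, rfl⟩
    obtain ⟨D, hD, hDT⟩ := exists_cocircuit_inter hTind hiT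
    have heval := congrFun hsum2 ⟨D, hD⟩
    rw [Finset.sum_apply] at heval
    have hcalc : ∑ j ∈ t, cocircFun M (j : α) ⟨D, hD⟩ = 1 := by
      have hstep : ∀ j ∈ t, cocircFun M (j : α) ⟨D, hD⟩ =
          if j = i then (1 : ZMod 2) else 0 := by
        intro j hj
        rw [cocircFun_apply]
        by_cases hjD : (j : α) ∈ D
        · have hmem : (j : α) ∈ D ∩ T := ⟨hjD, ⟨j, Finset.mem_coe.2 hj, rfl⟩⟩
          rw [hDT] at hmem
          have hji : j = i := Subtype.ext (Set.mem_singleton_iff.1 hmem)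
          rw [if_pos hjD, if_pos hji]
        · have hji : j ≠ i := by
            intro hji
            apply hjD
            rw [hji]
            have : (i : α) ∈ ({(i : α)} : Set α) := rfl
            rw [← hDT] at this
            exact this.1
          rw [if_neg hjD, if_neg hji]
      rw [Finset.sum_congr rfl hstep, Finset.sum_ite_eq' t i (fun _ => (1 : ZMod 2)),
        if_pos hit]
    rw [hcalc] at heval
    exact one_ne_zero heval
  · rintro ⟨hinj, hli⟩
    by_contra hnind
    rw [Matroid.not_indep_iff hSE] at hnind
    obtain ⟨C, hCS, hC⟩ := exists_isCircuit_subset hnind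
    have hCE : C ⊆ M.E := hC.1.subset_ground
    have hCfin : C.Finite := M.set_finite C hCE
    have hsum : ∑ e ∈ hCfin.toFinset, cocircFun M e = 0 := by
      funext DD
      rw [Finset.sum_apply]
      have hbool : ∑ e ∈ hCfin.toFinset, cocircFun M e DD =
          ((hCfin.toFinset.filter (· ∈ DD.1)).card : ZMod 2) := by
        simp only [cocircFun_apply]
        rw [← Finset.sum_filter, Finset.sum_const, nsmul_eq_mul, mul_one]
      rw [hbool]
      have hcards : (hCfin.toFinset.filter (· ∈ DD.1)).card = (C ∩ DD.1).ncard := by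
        rw [show C ∩ DD.1 = ↑(hCfin.toFinset.filter (· ∈ DD.1)) by
          ext x; simp [Set.Finite.mem_toFinset, and_comm], Set.ncard_coe_finset]
      rw [hcards]
      obtain ⟨k, hk⟩ := h C DD.1 hC DD.2
      rw [hk, Nat.cast_add, zmod2_add_self, Pi.zero_apply]
    have hCne : hCfin.toFinset.Nonempty := by
      rw [Set.Finite.toFinset_nonempty]; exact hC.1.nonempty
    have hinjC : Set.InjOn (cocircFun M) ↑hCfin.toFinset := by
      rw [Set.Finite.coe_toFinset]
      exact hinj.mono hCS
    have hsum' : ∑ v ∈ hCfin.toFinset.image (cocircFun M), v = 0 := by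
      rw [Finset.sum_image (g := cocircFun M) (f := fun v => v)
        (fun x hx y hy hxy => hinjC (by simpa using hx) (by simpa using hy) hxy)]
      exact hsum
    refine finset_sum_ne_zero_of_linearIndependent hli ?_ (hCne.image _) hsum'
    rw [Finset.coe_image, Set.Finite.coe_toFinset]
    exact Set.image_mono hCS

lemma backward_direction [M.Finite]
    (h : ∀ C D, M.IsCircuit' C → M✶.IsCircuit' D → Even (C ∩ D).ncard) : M.IsBinary := by
  classical
  have hfin : (cocircFun M '' M.E).Finite := M.ground_finite.image _
  set W : Submodule (ZMod 2) _ := Submodule.span (ZMod 2) (cocircFun M '' M.E) with hWdef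
  haveI : Module.Finite (ZMod 2) W := Module.Finite.span_of_finite _ hfin
  set n := Module.finrank (ZMod 2) W with hn
  let φ : W ≃ₗ[ZMod 2] (Fin n → ZMod 2) := (Module.finBasis (ZMod 2) W).equivFun
  let g : α → W := fun e =>
    if he : e ∈ M.E then ⟨cocircFun M e, Submodule.subset_span ⟨e, he, rfl⟩⟩ else 0
  have hval : ∀ e ∈ M.E, ((g e : _)) = cocircFun M e := fun e he => by
    simp only [g]; rw [dif_pos he]
  have himg : ∀ S ⊆ M.E, cocircFun M '' S = W.subtype '' (g '' S) := by
    intro S hS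
    ext v
    constructor
    · rintro ⟨e, he, rfl⟩
      exact ⟨g e, ⟨e, he, rfl⟩, hval e (hS he)⟩
    · rintro ⟨w, ⟨e, he, rfl⟩, rfl⟩
      exact ⟨e, he, (hval e (hS he)).symm⟩
  have himg2 : ∀ S : Set α, (fun e => φ (g e)) '' S = φ.toLinearMap '' (g '' S) := by
    intro S
    rw [← Set.image_comp]
    rfl
  refine ⟨Fin n → ZMod 2, inferInstance, inferInstance, fun e => φ (g e), ?_, ?_⟩
  · intro S hSE
    rw [cocircFun_indep_iff h hSE]
    apply and_congr
    · constructor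
      · intro hinj x hx y hy hxy
        apply hinj hx hy
        have : g x = g y := φ.injective hxy
        rw [← hval x (hSE hx), ← hval y (hSE hy), this]
      · intro hinj x hx y hy hxy
        apply hinj hx hy
        apply congrArg
        apply Subtype.ext
        rw [hval x (hSE hx), hval y (hSE hy)]
        exact hxy
    · rw [himg S hSE, himg2 S]
      rw [linearIndependent_image_iff_of_injective (Submodule.subtype W)
        Subtype.val_injective (g '' S)]
      rw [linearIndependent_image_iff_of_injective φ.toLinearMap φ.injective (g '' S)]
  · have h2 : Submodule.span (ZMod 2) (g '' M.E) = ⊤ := by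
      apply Submodule.map_injective_of_injective (Submodule.injective_subtype W)
      rw [Submodule.map_span, Submodule.map_top, Submodule.range_subtype]
      rw [← himg M.E (le_refl _), ← hWdef]
    rw [himg2 M.E, ← Submodule.map_span, h2, Submodule.map_top, LinearEquiv.range]

end Backward

/-- A finite matroid is binary if and only if the intersection of every circuit with every
cocircuit (circuit of the dual matroid) has an even number of elements. -/
theorem binary_iff_circuit_cocircuit_inter_even {α : Type*} (M : Matroid α) [M.Finite] :
    M.IsBinary ↔
      ∀ C D, M.IsCircuit' C → M✶.IsCircuit' D → Even (C ∩ D).ncard :=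
  ⟨fun h C D hC hD => forward_direction h hC hD, backward_direction⟩
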